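/- Define γ_m : ℝ → ℝ^{m+1} by γ_m(s)_j = sqrt(C(m,j)) cos^{m−j}(s) sin^j(s). Then there exists a skew-symmetric (m+1)×(m+1) real matrix L_m, nonzero only on the super- and sub-diagonals, such that γ_m'(s) = L_m γ_m(s) for all s. Consequently ‖D^k γ_m(s)‖ is constant in s for every k ≥ 0. -/

import Mathlib

noncomputable def auxA (m j : ℕ) : ℝ := Real.sqrt (((j + 1) * (m - j) : ℕ))

noncomputable def auxL (m : ℕ) : Matrix (Fin (m + 1)) (Fin (m + 1)) ℝ :=
  fun i j =>
    if (i : ℕ) + 1 = (j : ℕ) then -auxA m i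
    else if (j : ℕ) + 1 = (i : ℕ) then auxA m j else 0

lemma sqrt_helper {a b c d : ℕ} (h : a * c = b * b * d) :
    Real.sqrt a * Real.sqrt c = (b : ℝ) * Real.sqrt d := by
  rw [← Real.sqrt_mul (by positivity)]
  have h' : ((a : ℝ) * c) = (b : ℝ) * (b : ℝ) * d := by
    have := congrArg (Nat.cast : ℕ → ℝ) h
    push_cast at this
    linarith
  rw [h', Real.sqrt_mul (by positivity), Real.sqrt_mul_self (by positivity)]

lemma coeff1 (m i : ℕ) :
    auxA m i * Real.sqrt (m.choose (i + 1)) = ((m - i : ℕ) : ℝ) * Real.sqrt (m.choose i) := by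
  apply sqrt_helper
  have h := Nat.choose_succ_right_eq m i
  calc (i + 1) * (m - i) * m.choose (i + 1) = (m - i) * (m.choose (i + 1) * (i + 1)) := by ring
    _ = (m - i) * (m.choose i * (m - i)) := by rw [h]
    _ = (m - i) * (m - i) * m.choose i := by ring

lemma coeff2 (m k : ℕ) :
    auxA m k * Real.sqrt (m.choose k) = ((k + 1 : ℕ) : ℝ) * Real.sqrt (m.choose (k + 1)) := by
  apply sqrt_helper
  have h := Nat.choose_succ_right_eq m k
  calc (k + 1) * (m - k) * m.choose k = (k + 1) * (m.choose k * (m - k)) := by ring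
    _ = (k + 1) * (m.choose (k + 1) * (k + 1)) := by rw [h]
    _ = (k + 1) * (k + 1) * m.choose (k + 1) := by ring

lemma key (m : ℕ) (s : ℝ) (i : Fin (m + 1)) :
    HasDerivAt
      (fun t : ℝ => Real.sqrt (m.choose i) * Real.cos t ^ (m - (i : ℕ)) * Real.sin t ^ (i : ℕ))
      (∑ k : Fin (m + 1), auxL m i k *
        (Real.sqrt (m.choose k) * Real.cos s ^ (m - (k : ℕ)) * Real.sin s ^ (k : ℕ))) s := by
  set X : Fin (m + 1) → ℝ := fun k =>
    Real.sqrt (m.choose k) * Real.cos s ^ (m - (k : ℕ)) * Real.sin s ^ (k : ℕ) with hX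
  have split : ∀ k : Fin (m + 1), auxL m i k * X k =
      (if (i : ℕ) + 1 = (k : ℕ) then -auxA m i * X k else 0) +
      (if (k : ℕ) + 1 = (i : ℕ) then auxA m k * X k else 0) := by
    intro k
    simp only [auxL]
    split_ifs <;> first | ring1 | (exfalso; omega)
  have hsum : (∑ k : Fin (m + 1), auxL m i k * X k) =
      (∑ k : Fin (m + 1), if (i : ℕ) + 1 = (k : ℕ) then -auxA m i * X k else 0) +
      (∑ k : Fin (m + 1), if (k : ℕ) + 1 = (i : ℕ) then auxA m k * X k else 0) := by
    rw [← Finset.sum_add_distrib]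
    exact Finset.sum_congr rfl fun k _ => split k
  have E1 : (∑ k : Fin (m + 1), if (i : ℕ) + 1 = (k : ℕ) then -auxA m i * X k else 0) =
      Real.sqrt (m.choose i) *
        ((((m - (i : ℕ) : ℕ) : ℝ) * Real.cos s ^ (m - (i : ℕ) - 1) * (-Real.sin s)) *
          Real.sin s ^ (i : ℕ)) := by
    by_cases him : (i : ℕ) < m
    · set k1 : Fin (m + 1) := ⟨(i : ℕ) + 1, by omega⟩ with hk1
      rw [Finset.sum_eq_single k1]
      · have hv : (k1 : ℕ) = (i : ℕ) + 1 := rfl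
        rw [if_pos hv.symm]
        have hc := coeff1 m (i : ℕ)
        have he : m - ((i : ℕ) + 1) = m - (i : ℕ) - 1 := by omega
        have hp : Real.sin s ^ ((i : ℕ) + 1) = Real.sin s ^ (i : ℕ) * Real.sin s := pow_succ _ _
        simp only [hX, hv, he, hp]
        linear_combination (-(Real.cos s ^ (m - (i : ℕ) - 1)) * (Real.sin s ^ (i : ℕ) * Real.sin s)) * hc
      · intro b _ hb
        rw [if_neg]
        intro hcontra
        exact hb (Fin.ext hcontra.symm)
      · intro h; exact absurd (Finset.mem_univ k1) h
    · have him' : (i : ℕ) = m := by omega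
      rw [Finset.sum_eq_zero]
      · have : m - (i : ℕ) = 0 := by omega
        rw [this]
        norm_num
      · intro k _
        rw [if_neg]
        have := k.isLt
        omega
  have E2 : (∑ k : Fin (m + 1), if (k : ℕ) + 1 = (i : ℕ) then auxA m k * X k else 0) =
      Real.sqrt (m.choose i) *
        (Real.cos s ^ (m - (i : ℕ)) *
          (((i : ℕ) : ℝ) * Real.sin s ^ ((i : ℕ) - 1) * Real.cos s)) := by
    by_cases hi0 : 0 < (i : ℕ)
    · set k2 : Fin (m + 1) := ⟨(i : ℕ) - 1, by omega⟩ with hk2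
      rw [Finset.sum_eq_single k2]
      · have hv : (k2 : ℕ) = (i : ℕ) - 1 := rfl
        rw [if_pos (by omega : (k2 : ℕ) + 1 = (i : ℕ))]
        have hc := coeff2 m ((i : ℕ) - 1)
        have h1 : (i : ℕ) - 1 + 1 = (i : ℕ) := by omega
        rw [h1] at hc
        have he : m - ((i : ℕ) - 1) = (m - (i : ℕ)) + 1 := by
          have := i.isLt; omega
        have hp : Real.cos s ^ (m - (i : ℕ) + 1) = Real.cos s ^ (m - (i : ℕ)) * Real.cos s :=
          pow_succ _ _
        simp only [hX, hv, he, hp]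
        linear_combination (Real.cos s ^ (m - (i : ℕ)) * Real.cos s * Real.sin s ^ ((i : ℕ) - 1)) * hc
      · intro b _ hb
        rw [if_neg]
        intro hcontra
        exact hb (Fin.ext (show (b : ℕ) = (i : ℕ) - 1 by omega))
      · intro h; exact absurd (Finset.mem_univ k2) h
    · have hi0' : (i : ℕ) = 0 := by omega
      rw [Finset.sum_eq_zero]
      · rw [hi0']; norm_num
      · intro k _
        rw [if_neg]
        omega
  have H := (((Real.hasDerivAt_cos s).pow (m - (i : ℕ))).mul
      ((Real.hasDerivAt_sin s).pow (i : ℕ))).const_mul (Real.sqrt (m.choose i))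
  have hval : (∑ k : Fin (m + 1), auxL m i k * X k) =
      Real.sqrt (m.choose i) *
        ((((m - (i : ℕ) : ℕ) : ℝ) * Real.cos s ^ (m - (i : ℕ) - 1) * (-Real.sin s)) *
            Real.sin s ^ (i : ℕ) +
          Real.cos s ^ (m - (i : ℕ)) *
            (((i : ℕ) : ℝ) * Real.sin s ^ ((i : ℕ) - 1) * Real.cos s)) := by
    rw [hsum, E1, E2, mul_add]
  rw [hval]
  simpa only [Pi.pow_apply, Pi.mul_apply, ← mul_assoc] using H

theorem stmt16 (m : ℕ)
    (γ : ℝ → EuclideanSpace ℝ (Fin (m + 1)))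
    (hγ : ∀ (s : ℝ) (j : Fin (m + 1)),
      γ s j = Real.sqrt (m.choose j) * Real.cos s ^ (m - (j : ℕ)) * Real.sin s ^ (j : ℕ)) :
    (∃ L : Matrix (Fin (m + 1)) (Fin (m + 1)) ℝ,
      L.transpose = -L ∧
      (∀ i j : Fin (m + 1), (i : ℕ) + 1 ≠ (j : ℕ) → (j : ℕ) + 1 ≠ (i : ℕ) → L i j = 0) ∧
      ∀ s : ℝ, deriv γ s = Matrix.toEuclideanLin L (γ s)) ∧
    ∀ k : ℕ, ∃ c : ℝ, ∀ s : ℝ, ‖iteratedDeriv k γ s‖ = c := by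
  classical
  set L := auxL m with hLdef
  have hskewmat : L.transpose = -L := by
    ext i j
    simp only [Matrix.transpose_apply, Matrix.neg_apply, hLdef, auxL]
    split_ifs <;> first | ring1 | (exfalso; omega)
  have hderiv : ∀ s, HasDerivAt γ (Matrix.toEuclideanLin L (γ s)) s := by
    intro s
    have hkey : ∀ j : Fin (m + 1),
        HasDerivAt (fun t => γ t j) (∑ k, L j k * γ s k) s := by
      intro j
      have hfun : (fun t => γ t j) = fun t =>
          Real.sqrt (m.choose j) * Real.cos t ^ (m - (j : ℕ)) * Real.sin t ^ (j : ℕ) :=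
        funext fun t => hγ t j
      have hval : (∑ k, L j k * γ s k) = ∑ k : Fin (m + 1), auxL m j k *
          (Real.sqrt (m.choose k) * Real.cos s ^ (m - (k : ℕ)) * Real.sin s ^ (k : ℕ)) :=
        Finset.sum_congr rfl fun k _ => by rw [hγ s k]
      rw [hfun, hval]
      exact key m s j
    have hpi : HasDerivAt (fun t => (fun j => γ t j)) (fun j => ∑ k, L j k * γ s k) s :=
      hasDerivAt_pi.2 hkey
    have h2 := HasFDerivAt.comp_hasDerivAt s
      (ContinuousLinearMap.hasFDerivAt
        (((EuclideanSpace.equiv (Fin (m + 1)) ℝ).symm :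
          (Fin (m + 1) → ℝ) →L[ℝ] EuclideanSpace ℝ (Fin (m + 1))))) hpi
    have hfun2 : (⇑((EuclideanSpace.equiv (Fin (m + 1)) ℝ).symm :
          (Fin (m + 1) → ℝ) →L[ℝ] EuclideanSpace ℝ (Fin (m + 1))) ∘
        fun t => (fun j => γ t j)) = γ := rfl
    have hval2 : ((EuclideanSpace.equiv (Fin (m + 1)) ℝ).symm :
          (Fin (m + 1) → ℝ) →L[ℝ] EuclideanSpace ℝ (Fin (m + 1)))
        (fun j => ∑ k, L j k * γ s k) = Matrix.toEuclideanLin L (γ s) := by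
      ext j
      simp [Matrix.toEuclideanLin_apply, Matrix.mulVec, dotProduct]
    rw [hfun2, hval2] at h2
    exact h2
  set T : EuclideanSpace ℝ (Fin (m + 1)) →L[ℝ] EuclideanSpace ℝ (Fin (m + 1)) :=
    LinearMap.toContinuousLinearMap (Matrix.toEuclideanLin L) with hTdef
  have hTapp : ∀ x, T x = Matrix.toEuclideanLin L x := fun x => rfl
  have hderiv' : ∀ s, HasDerivAt γ (T (γ s)) s := fun s => (hTapp (γ s)) ▸ hderiv s
  have hTk : ∀ (k : ℕ) (x : EuclideanSpace ℝ (Fin (m + 1))),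
      (T ^ k) (T x) = T ((T ^ k) x) := by
    intro k x
    calc (T ^ k) (T x) = ((T ^ k) * T) x := rfl
      _ = (T ^ (k + 1)) x := by rw [← pow_succ]
      _ = (T * T ^ k) x := by rw [pow_succ']
      _ = T ((T ^ k) x) := rfl
  have hiter : ∀ (k : ℕ) (s : ℝ), iteratedDeriv k γ s = (T ^ k) (γ s) := by
    intro k
    induction k with
    | zero => intro s; simp [iteratedDeriv_zero]
    | succ k ih =>
      intro s
      rw [iteratedDeriv_succ]
      have hiterfun : iteratedDeriv k γ = fun t => (T ^ k) (γ t) := funext ih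
      have hcomp : HasDerivAt (fun t => (T ^ k) (γ t)) ((T ^ k) (T (γ s))) s :=
        HasFDerivAt.comp_hasDerivAt s ((T ^ k).hasFDerivAt) (hderiv' s)
      rw [hiterfun, hcomp.deriv, pow_succ, ContinuousLinearMap.mul_apply]
  have hinner : ∀ x : EuclideanSpace ℝ (Fin (m + 1)), (inner ℝ (T x) x : ℝ) = 0 := by
    intro x
    have hLa : ∀ i k : Fin (m + 1), L k i = -L i k := by
      intro i k
      have h := congrFun (congrFun hskewmat i) k
      simpa [Matrix.transpose_apply, Matrix.neg_apply] using h
    have hx : (inner ℝ (T x) x : ℝ) = ∑ i, ∑ k, L i k * x k * x i := by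
      rw [PiLp.inner_apply]
      refine Finset.sum_congr rfl fun i _ => ?_
      have hTc : (T x) i = ∑ k, L i k * x k := by
        rw [hTapp]
        simp [Matrix.toEuclideanLin_apply, Matrix.mulVec, dotProduct]
      simp only [RCLike.inner_apply, conj_trivial, hTc, Finset.sum_mul]
      rw [mul_comm, Finset.sum_mul]
    have hswap : (∑ i, ∑ k, L i k * x k * x i) = -(∑ i, ∑ k, L i k * x k * x i) := by
      calc (∑ i, ∑ k, L i k * x k * x i) = ∑ k, ∑ i, L i k * x k * x i := Finset.sum_comm
        _ = ∑ k, ∑ i, -(L k i * x i * x k) := by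
            refine Finset.sum_congr rfl fun k _ => Finset.sum_congr rfl fun i _ => ?_
            rw [hLa i k]; ring
        _ = -(∑ i, ∑ k, L i k * x k * x i) := by
            simp [Finset.sum_neg_distrib]
    rw [hx]
    linarith [hswap, hx]
  refine ⟨⟨L, hskewmat, ?_, fun s => (hderiv s).deriv⟩, ?_⟩
  · intro i j h1 h2
    simp only [hLdef, auxL, if_neg h1, if_neg h2]
  · intro k
    refine ⟨‖(T ^ k) (γ 0)‖, fun s => ?_⟩
    rw [hiter k s]
    have hv : ∀ t, HasDerivAt (fun u => (T ^ k) (γ u)) ((T ^ k) (T (γ t))) t := fun t =>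
      HasFDerivAt.comp_hasDerivAt t ((T ^ k).hasFDerivAt) (hderiv' t)
    have hg : ∀ t, HasDerivAt
        (fun u => (inner ℝ ((T ^ k) (γ u)) ((T ^ k) (γ u)) : ℝ)) 0 t := by
      intro t
      have h0 := HasDerivAt.inner ℝ (hv t) (hv t)
      have hz : (inner ℝ ((T ^ k) (γ t)) ((T ^ k) (T (γ t))) : ℝ) +
          (inner ℝ ((T ^ k) (T (γ t))) ((T ^ k) (γ t)) : ℝ) = 0 := by
        rw [hTk k (γ t), real_inner_comm]
        have := hinner ((T ^ k) (γ t))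
        linarith
      rw [hz] at h0
      exact h0
    have hconst := is_const_of_deriv_eq_zero
      (fun t => (hg t).differentiableAt) (fun t => (hg t).deriv) s 0
    have h1 : ‖(T ^ k) (γ s)‖ * ‖(T ^ k) (γ s)‖ = ‖(T ^ k) (γ 0)‖ * ‖(T ^ k) (γ 0)‖ := by
      rw [← real_inner_self_eq_norm_mul_norm, ← real_inner_self_eq_norm_mul_norm]
      exact hconst
    exact (mul_self_inj (norm_nonneg _) (norm_nonneg _)).1 h1
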